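/- Let P₁* (Todorcevic's forcing) consist of finite sets p of convergent sequences of real numbers s with lim s ∉ s, such that for all distinct s, t ∈ p, lim s ∉ t; ordered by inclusion. For rational d, the translation φ_d(p) = {s + d : s ∈ p} is an automorphism of P₁*, and for each p ∈ P₁* the set {φ_d(p) : d ∈ ℚ} is predense in P₁* (every condition is compatible with some rational translate of p). -/

import Mathlib

/-- (S, l) is a convergent sequence of reals (viewed as a set) with limit l ∉ S. -/
def IsCSeq (s : Set ℝ × ℝ) : Prop :=
  s.1.Infinite ∧ (∀ ε > (0:ℝ), {x ∈ s.1 | ε ≤ |x - s.2|}.Finite) ∧ s.2 ∉ s.1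

/-- A condition of Todorcevic's forcing P₁*: a finite set of convergent
sequences such that the limit of one is never a member of another. -/
def IsCond (p : Set (Set ℝ × ℝ)) : Prop :=
  p.Finite ∧ (∀ s ∈ p, IsCSeq s) ∧
    ∀ s ∈ p, ∀ t ∈ p, s ≠ t → s.2 ∉ t.1

/-- Translation of a condition by d. -/
def transl (d : ℝ) (p : Set (Set ℝ × ℝ)) : Set (Set ℝ × ℝ) :=
  (fun s => ((fun x => x + d) '' s.1, s.2 + d)) '' p

lemma isCSeq_transl {d : ℝ} {s : Set ℝ × ℝ} (h : IsCSeq s) :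
    IsCSeq ((fun x => x + d) '' s.1, s.2 + d) := by
  obtain ⟨h1, h2, h3⟩ := h
  refine ⟨h1.image ((add_left_injective d).injOn), ?_, ?_⟩
  · intro ε hε
    have he : {x ∈ (fun x => x + d) '' s.1 | ε ≤ |x - (s.2 + d)|}
        = (fun x => x + d) '' {x ∈ s.1 | ε ≤ |x - s.2|} := by
      ext x
      simp only [Set.mem_setOf_eq, Set.mem_image]
      constructor
      · rintro ⟨⟨y, hy, rfl⟩, hx⟩
        refine ⟨y, ⟨hy, ?_⟩, rfl⟩
        have : y + d - (s.2 + d) = y - s.2 := by ring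
        rwa [this] at hx
      · rintro ⟨y, ⟨hy, hx⟩, rfl⟩
        refine ⟨⟨y, hy, rfl⟩, ?_⟩
        have : y + d - (s.2 + d) = y - s.2 := by ring
        rwa [this]
    rw [he]
    exact (h2 ε hε).image _
  · rintro ⟨y, hy, hxy⟩
    simp only at hxy
    have : y = s.2 := by linarith
    exact h3 (this ▸ hy)

lemma isCond_transl {d : ℝ} {p : Set (Set ℝ × ℝ)} (h : IsCond p) :
    IsCond (transl d p) := by
  obtain ⟨h1, h2, h3⟩ := h
  refine ⟨h1.image _, ?_, ?_⟩
  · rintro s ⟨a, ha, rfl⟩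
    exact isCSeq_transl (h2 a ha)
  · rintro s ⟨a, ha, rfl⟩ t ⟨b, hb, rfl⟩ hst hmem
    have hab : a ≠ b := fun h => hst (by rw [h])
    simp only at hmem
    obtain ⟨y, hy, hxy⟩ := hmem
    simp only at hxy
    have : y = a.2 := by linarith
    exact h3 a ha b hb hab (this ▸ hy)

lemma transl_neg_transl (d : ℝ) (p : Set (Set ℝ × ℝ)) :
    transl (-d) (transl d p) = p := by
  unfold transl
  rw [Set.image_image]
  have : (fun s : Set ℝ × ℝ =>
      ((fun x => x + -d) '' ((fun x => x + d) '' s.1), s.2 + d + -d)) = id := by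
    funext s
    rw [Set.image_image]
    simp
  rw [this, Set.image_id]

lemma cseq_bound {s : Set ℝ × ℝ} (h : IsCSeq s) :
    ∃ M : ℝ, (∀ x ∈ s.1, |x| ≤ M) ∧ |s.2| ≤ M := by
  obtain ⟨-, h2, -⟩ := h
  obtain ⟨M0, hM0⟩ := ((h2 1 one_pos).image abs).bddAbove
  refine ⟨max M0 (|s.2| + 1), ?_, ?_⟩
  · intro x hx
    rcases le_or_gt 1 |x - s.2| with hc | hc
    · exact le_max_of_le_left (hM0 ⟨x, ⟨hx, hc⟩, rfl⟩)
    · have : |x| ≤ |x - s.2| + |s.2| := by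
        calc |x| = |(x - s.2) + s.2| := by ring_nf
        _ ≤ |x - s.2| + |s.2| := abs_add_le _ _
      refine le_max_of_le_right ?_
      linarith
  · exact le_max_of_le_right (by linarith [abs_nonneg s.2])

lemma cond_bound {p : Set (Set ℝ × ℝ)} (hf : p.Finite) :
    ∃ M : ℝ, ∀ s ∈ p, IsCSeq s → (∀ x ∈ s.1, |x| ≤ M) ∧ |s.2| ≤ M := by
  refine Set.Finite.induction_on p hf ⟨0, by simp⟩ ?_
  rintro a t _ _ ⟨M, hM⟩
  by_cases hcs : IsCSeq a
  · obtain ⟨Ma, hMa⟩ := cseq_bound hcs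
    refine ⟨max M Ma, ?_⟩
    rintro s (rfl | hs) hc
    · exact ⟨fun x hx => le_max_of_le_right (hMa.1 x hx),
        le_max_of_le_right hMa.2⟩
    · exact ⟨fun x hx => le_max_of_le_left ((hM s hs hc).1 x hx),
        le_max_of_le_left (hM s hs hc).2⟩
  · refine ⟨M, ?_⟩
    rintro s (rfl | hs) hc
    · exact absurd hc hcs
    · exact hM s hs hc

theorem stmt11 :
    (∀ d : ℚ, ∀ p : Set (Set ℝ × ℝ), IsCond p ↔ IsCond (transl d p)) ∧
    (∀ d : ℚ, ∀ p : Set (Set ℝ × ℝ), transl (-(d:ℝ)) (transl d p) = p) ∧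
    (∀ p q : Set (Set ℝ × ℝ), IsCond p → IsCond q →
      ∃ d : ℚ, IsCond (transl d p ∪ q)) := by
  refine ⟨?_, fun d p => transl_neg_transl d p, ?_⟩
  · intro d p
    constructor
    · exact isCond_transl
    · intro h
      have := isCond_transl (d := -(d : ℝ)) h
      rwa [transl_neg_transl] at this
  · intro p q hp hq
    obtain ⟨M, hM⟩ := cond_bound (hp.1.union hq.1)
    obtain ⟨d, hd⟩ := exists_rat_gt (2 * M + 1)
    have hdp := isCond_transl (d := (d : ℝ)) hp
    refine ⟨d, (hp.1.image _).union hq.1, ?_, ?_⟩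
    · rintro s (hs | hs)
      · exact hdp.2.1 s hs
      · exact hq.2.1 s hs
    · rintro s hs t ht hst hmem
      -- bounds for elements of p ∪ q
      have key : ∀ a ∈ p, ∀ t ∈ q, ((fun x => x + (d:ℝ)) '' a.1, a.2 + (d:ℝ)).2 ∉ t.1 := by
        intro a ha t htq hcon
        have hb1 := hM t (Or.inr htq) (hq.2.1 t htq)
        have hb2 := hM a (Or.inl ha) (hp.2.1 a ha)
        have h1 : |a.2 + (d:ℝ)| ≤ M := hb1.1 _ hcon
        have h2 : -M ≤ a.2 := neg_le_of_abs_le hb2.2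
        have := abs_le.mp h1
        linarith [this.2]
      have key2 : ∀ a ∈ p, ∀ t ∈ q, t.2 ∉ ((fun x => x + (d:ℝ)) '' a.1, a.2 + (d:ℝ)).1 := by
        intro a ha t htq hcon
        obtain ⟨y, hy, hxy⟩ := hcon
        have hb1 := hM t (Or.inr htq) (hq.2.1 t htq)
        have hb2 := hM a (Or.inl ha) (hp.2.1 a ha)
        have h1 : |y| ≤ M := hb2.1 y hy
        have h2 : |t.2| ≤ M := hb1.2
        have h3 := abs_le.mp h1
        have h4 := abs_le.mp h2
        simp only at hxy
        linarith [h3.1, h4.2]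
      rcases hs with hs | hs <;> rcases ht with ht | ht
      · exact hdp.2.2 s hs t ht hst hmem
      · obtain ⟨a, ha, rfl⟩ := hs
        exact key a ha t ht hmem
      · obtain ⟨a, ha, rfl⟩ := ht
        exact key2 a ha s hs hmem
      · exact hq.2.2 s hs t ht hst hmem
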